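/- Define φ : ℂ³ → ℂ⁵ by φ(x,y,z) = (x², 2xy, 2xz + y², 2yz, z²). For all (x,y,z) and (x',y',z') in ℂ³, φ(x,y,z) = φ(x',y',z') if and only if (x',y',z') = (x,y,z) or (x',y',z') = (−x,−y,−z). -/
import Mathlib


theorem stmt_7
    (φ : ℂ × ℂ × ℂ → ℂ × ℂ × ℂ × ℂ × ℂ)
    (hφ : ∀ x y z : ℂ, φ (x, y, z) = (x ^ 2, 2 * x * y, 2 * x * z + y ^ 2, 2 * y * z, z ^ 2))
    (x y z x' y' z' : ℂ) :
    φ (x, y, z) = φ (x', y', z') ↔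
      ((x', y', z') = (x, y, z) ∨ (x', y', z') = (-x, -y, -z)) := by
  simp only [hφ, Prod.mk.injEq]
  constructor
  · rintro ⟨e1, e2, e3, e4, e5⟩
    have hx : x' = x ∨ x' = -x := by
      rcases mul_eq_zero.mp (show (x' - x) * (x' + x) = 0 by linear_combination -e1) with h | h
      · exact Or.inl (by linear_combination h)
      · exact Or.inr (by linear_combination h)
    by_cases hx0 : x = 0
    · subst hx0
      have hx' : x' = 0 := by rcases hx with h | h <;> simpa using h
      subst hx'
      have hy : y' = y ∨ y' = -y := by
        rcases mul_eq_zero.mp (show (y' - y) * (y' + y) = 0 by linear_combination -e3) with h | h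
        · exact Or.inl (by linear_combination h)
        · exact Or.inr (by linear_combination h)
      by_cases hy0 : y = 0
      · subst hy0
        have hy' : y' = 0 := by rcases hy with h | h <;> simpa using h
        subst hy'
        rcases mul_eq_zero.mp (show (z' - z) * (z' + z) = 0 by linear_combination -e5) with h | h
        · exact Or.inl ⟨rfl, rfl, by linear_combination h⟩
        · exact Or.inr ⟨by simp, by simp, by linear_combination h⟩
      · have h2y : (2:ℂ) * y ≠ 0 := mul_ne_zero two_ne_zero hy0
        rcases hy with h | h
        · refine Or.inl ⟨rfl, h, ?_⟩
          exact (mul_left_cancel₀ h2y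
            (show (2*y)*z = (2*y)*z' by linear_combination e4 + 2*z'*h)).symm
        · refine Or.inr ⟨by simp, h, ?_⟩
          exact mul_left_cancel₀ h2y
            (show (2*y)*z' = (2*y)*(-z) by linear_combination 2*z'*h + e4)
    · have h2x : (2:ℂ) * x ≠ 0 := mul_ne_zero two_ne_zero hx0
      rcases hx with h | h
      · have hy : y' = y := mul_left_cancel₀ h2x
          (show (2*x)*y' = (2*x)*y by linear_combination -2*y'*h - e2)
        have hz : z' = z := mul_left_cancel₀ h2x
          (show (2*x)*z' = (2*x)*z by linear_combination -e3 - 2*z'*h - (y+y')*hy)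
        exact Or.inl ⟨h, hy, hz⟩
      · have hy : y' = -y := mul_left_cancel₀ h2x
          (show (2*x)*y' = (2*x)*(-y) by linear_combination 2*y'*h + e2)
        have hz : z' = -z := mul_left_cancel₀ h2x
          (show (2*x)*z' = (2*x)*(-z) by linear_combination 2*z'*h + e3 + (y'-y)*hy)
        exact Or.inr ⟨h, hy, hz⟩
  · rintro (⟨h1, h2, h3⟩ | ⟨h1, h2, h3⟩) <;> subst h1 <;> subst h2 <;> subst h3 <;>
      exact ⟨by ring, by ring, by ring, by ring, by ring⟩
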